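/- Consider the iteration π_{i+1} = argmax_π M_i(π), where M_i(π) = L_{π_i}(π) − C·D_KL^max(π_i, π) and C = 2εγ/(1−γ)² with ε ≥ max_s |E_{a∼π(·|s)}[A_{π_i}(s,a)]| for all candidate policies π. Then the sequence of returns is monotonically nondecreasing: η(π_{i+1}) ≥ η(π_i) for all i. -/

import Mathlib

open Finset

/-- State distribution at time `t` when executing policy `π`, starting from `ρ₀`. -/
noncomputable def stateDist {S A : Type} [Fintype S] [Fintype A]
    (P : S → A → S → ℝ) (π : S → A → ℝ) (ρ₀ : S → ℝ) : ℕ → S → ℝ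
  | 0 => ρ₀
  | (t+1) => fun s' => ∑ s, ∑ a, stateDist P π ρ₀ t s * π s a * P s a s'

/-- Unnormalized discounted state visitation frequency. -/
noncomputable def visit {S A : Type} [Fintype S] [Fintype A]
    (P : S → A → S → ℝ) (π : S → A → ℝ) (ρ₀ : S → ℝ) (γ : ℝ) (s : S) : ℝ :=
  ∑' t : ℕ, γ ^ t * stateDist P π ρ₀ t s

/-- A (strictly positive) stochastic policy. -/
def IsPolicy {S A : Type} [Fintype A] (π : S → A → ℝ) : Prop :=
  (∀ s a, 0 < π s a) ∧ ∀ s, ∑ a, π s a = 1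

section Basic
variable {S A : Type} [Fintype S] [Fintype A]
  {P : S → A → S → ℝ} {π : S → A → ℝ} {ρ₀ : S → ℝ}

lemma stateDist_nonneg (hPpos : ∀ s a s', 0 ≤ P s a s') (hρpos : ∀ s, 0 ≤ ρ₀ s)
    (hπ : IsPolicy π) : ∀ t s, 0 ≤ stateDist P π ρ₀ t s := by
  intro t
  induction t with
  | zero => exact hρpos
  | succ t ih =>
    intro s'
    simp only [stateDist]
    refine Finset.sum_nonneg fun s _ => Finset.sum_nonneg fun a _ => ?_
    exact mul_nonneg (mul_nonneg (ih s) (hπ.1 s a).le) (hPpos s a s')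

lemma stateDist_sum (hPsum : ∀ s a, ∑ s', P s a s' = 1) (hρsum : ∑ s, ρ₀ s = 1)
    (hπ : IsPolicy π) : ∀ t, ∑ s, stateDist P π ρ₀ t s = 1 := by
  intro t
  induction t with
  | zero => exact hρsum
  | succ t ih =>
    simp only [stateDist]
    rw [Finset.sum_comm]
    calc ∑ s, ∑ s', ∑ a, stateDist P π ρ₀ t s * π s a * P s a s'
        = ∑ s, stateDist P π ρ₀ t s := by
          refine Finset.sum_congr rfl fun s _ => ?_
          rw [Finset.sum_comm]
          calc ∑ a, ∑ s', stateDist P π ρ₀ t s * π s a * P s a s'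
              = ∑ a, stateDist P π ρ₀ t s * π s a := by
                refine Finset.sum_congr rfl fun a _ => ?_
                rw [← Finset.mul_sum, hPsum, mul_one]
            _ = stateDist P π ρ₀ t s := by rw [← Finset.mul_sum, hπ.2, mul_one]
      _ = 1 := ih

lemma stateDist_le_one (hPpos : ∀ s a s', 0 ≤ P s a s')
    (hPsum : ∀ s a, ∑ s', P s a s' = 1) (hρpos : ∀ s, 0 ≤ ρ₀ s)
    (hρsum : ∑ s, ρ₀ s = 1) (hπ : IsPolicy π) (t : ℕ) (s : S) :
    stateDist P π ρ₀ t s ≤ 1 := by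
  have h := stateDist_sum hPsum hρsum hπ (P := P) (π := π) t
  calc stateDist P π ρ₀ t s ≤ ∑ s', stateDist P π ρ₀ t s' :=
        Finset.single_le_sum (fun s' _ => stateDist_nonneg hPpos hρpos hπ t s') (mem_univ s)
    _ = 1 := h

/-- crude bound -/
lemma abs_sum_dist_mul_le (hPpos : ∀ s a s', 0 ≤ P s a s')
    (hPsum : ∀ s a, ∑ s', P s a s' = 1) (hρpos : ∀ s, 0 ≤ ρ₀ s)
    (hρsum : ∑ s, ρ₀ s = 1) (hπ : IsPolicy π) (t : ℕ) (f : S → ℝ) :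
    |∑ s, stateDist P π ρ₀ t s * f s| ≤ ∑ s, |f s| := by
  calc |∑ s, stateDist P π ρ₀ t s * f s| ≤ ∑ s, |stateDist P π ρ₀ t s * f s| :=
        Finset.abs_sum_le_sum_abs _ _
    _ ≤ ∑ s, |f s| := by
        refine Finset.sum_le_sum fun s _ => ?_
        rw [abs_mul, abs_of_nonneg (stateDist_nonneg hPpos hρpos hπ t s)]
        have := stateDist_le_one hPpos hPsum hρpos hρsum hπ t s
        nlinarith [abs_nonneg (f s)]

end Basic


section Tele
/-- Summability from a geometric bound. -/
lemma summable_of_geom_bound {f : ℕ → ℝ} {γ K : ℝ} (hγ0 : 0 ≤ γ) (hγ1 : γ < 1)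
    (h : ∀ t, |f t| ≤ K * γ ^ t) : Summable f := by
  refine Summable.of_norm_bounded
    ((summable_geometric_of_lt_one hγ0 hγ1).mul_left K) ?_
  simpa using h

/-- Telescoping sum lemma. -/
lemma tele_hasSum {u R : ℕ → ℝ} {γ K : ℝ} (hγ0 : 0 ≤ γ) (hγ1 : γ < 1)
    (hR : ∀ t, |R t| ≤ K) (hu : ∀ t, |u t| ≤ K) :
    HasSum (fun t => γ ^ t * (R t + γ * u (t+1) - u t))
      ((∑' t, γ ^ t * R t) - u 0) := by
  have hKnn : 0 ≤ K := le_trans (abs_nonneg _) (hR 0)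
  have hsumR : Summable (fun t => γ ^ t * R t) := by
    refine summable_of_geom_bound hγ0 hγ1 (K := K) fun t => ?_
    rw [abs_mul, abs_pow, abs_of_nonneg hγ0, mul_comm]
    exact mul_le_mul_of_nonneg_right (hR t) (pow_nonneg hγ0 t)
  have hsumF : Summable (fun t => γ ^ t * (R t + γ * u (t+1) - u t)) := by
    refine summable_of_geom_bound hγ0 hγ1 (K := K + γ * K + K) fun t => ?_
    rw [abs_mul, abs_pow, abs_of_nonneg hγ0, mul_comm]
    refine mul_le_mul_of_nonneg_right ?_ (pow_nonneg hγ0 t)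
    calc |R t + γ * u (t+1) - u t| ≤ |R t| + |γ * u (t+1)| + |u t| := by
          exact (abs_sub _ _).trans (by gcongr; exact abs_add_le _ _)
      _ ≤ K + γ * K + K := by
          rw [abs_mul, abs_of_nonneg hγ0]
          gcongr <;> [exact hR t; exact hu (t+1); exact hu t]
  -- partial sums identity
  have hpart : ∀ N, ∑ t ∈ Finset.range N, γ ^ t * (R t + γ * u (t+1) - u t)
      = (∑ t ∈ Finset.range N, γ ^ t * R t) + γ ^ N * u N - u 0 := by
    intro N
    induction N with
    | zero => simp
    | succ N ih =>
      rw [Finset.sum_range_succ, Finset.sum_range_succ, ih]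
      ring
  have h1 := hsumF.hasSum.tendsto_sum_nat
  have h2 := hsumR.hasSum.tendsto_sum_nat
  have h3 : Filter.Tendsto (fun N => γ ^ N * u N) Filter.atTop (nhds 0) := by
    have hb : Filter.Tendsto (fun N : ℕ => K * γ ^ N) Filter.atTop (nhds 0) := by
      simpa using (tendsto_pow_atTop_nhds_zero_of_lt_one hγ0 hγ1).const_mul K
    refine squeeze_zero_norm (fun N => ?_) hb
    rw [norm_mul, norm_pow, Real.norm_eq_abs, Real.norm_eq_abs, abs_of_nonneg hγ0, mul_comm]
    exact mul_le_mul_of_nonneg_right (hu N) (pow_nonneg hγ0 N)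
  have h4 : Filter.Tendsto (fun N => ∑ t ∈ Finset.range N, γ ^ t * (R t + γ * u (t+1) - u t))
      Filter.atTop (nhds ((∑' t, γ ^ t * R t) - u 0)) := by
    have := (h2.add h3).sub (tendsto_const_nhds (x := u 0))
    simp only [add_zero] at this
    exact this.congr fun N => (hpart N).symm
  have := tendsto_nhds_unique h1 h4
  rw [← this]
  exact hsumF.hasSum

end Tele

section Abs
/-- `abs_sub` replacement check -/
example (a b : ℝ) : |a - b| ≤ |a| + |b| := abs_sub _ _
end Abs

section MDP
variable {S A : Type} [Fintype S] [Fintype A]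
  {P : S → A → S → ℝ} {π : S → A → ℝ} {ρ₀ : S → ℝ} {γ : ℝ}

lemma next_dist_pair (W : S → ℝ) (t : ℕ) :
    ∑ s', stateDist P π ρ₀ (t+1) s' * W s'
      = ∑ s, stateDist P π ρ₀ t s * ∑ a, π s a * ∑ s', P s a s' * W s' := by
  simp only [stateDist, Finset.sum_mul, Finset.mul_sum]
  rw [Finset.sum_comm]
  refine Finset.sum_congr rfl fun s _ => ?_
  rw [Finset.sum_comm]
  exact Finset.sum_congr rfl fun a _ => Finset.sum_congr rfl fun s' _ => by ring

/-- One-step algebra identity. -/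
lemma step_identity (hπ : IsPolicy π) (r : S → ℝ) (W : S → ℝ) (t : ℕ) :
    ∑ s, stateDist P π ρ₀ t s *
        (∑ a, π s a * (r s + γ * ∑ s', P s a s' * W s') - W s)
      = (∑ s, stateDist P π ρ₀ t s * r s)
        + γ * (∑ s', stateDist P π ρ₀ (t+1) s' * W s')
        - ∑ s, stateDist P π ρ₀ t s * W s := by
  rw [next_dist_pair, Finset.mul_sum, ← Finset.sum_add_distrib, ← Finset.sum_sub_distrib]
  refine Finset.sum_congr rfl fun s _ => ?_
  have hexp : ∑ a, π s a * (r s + γ * ∑ s', P s a s' * W s')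
      = r s + γ * ∑ a, π s a * ∑ s', P s a s' * W s' := by
    simp only [mul_add, Finset.sum_add_distrib, ← Finset.sum_mul, hπ.2, one_mul]
    congr 1
    rw [Finset.mul_sum]
    exact Finset.sum_congr rfl fun a _ => by ring
  rw [hexp]
  ring
end MDP
section MDP2
variable {S A : Type} [Fintype S] [Fintype A]
  {P : S → A → S → ℝ} {π : S → A → ℝ} {ρ₀ : S → ℝ} {γ : ℝ}

variable (hγ0 : 0 < γ) (hγ1 : γ < 1)
  (hPpos : ∀ s a s', 0 ≤ P s a s') (hPsum : ∀ s a, ∑ s', P s a s' = 1)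
  (hρpos : ∀ s, 0 ≤ ρ₀ s) (hρsum : ∑ s, ρ₀ s = 1) (hπ : IsPolicy π)

include hγ0 hγ1 hPpos hPsum hρpos hρsum hπ

lemma value_hasSum (r W : S → ℝ) :
    HasSum (fun t => γ ^ t * ∑ s, stateDist P π ρ₀ t s *
        (∑ a, π s a * (r s + γ * ∑ s', P s a s' * W s') - W s))
      ((∑' t, γ ^ t * ∑ s, stateDist P π ρ₀ t s * r s) - ∑ s, ρ₀ s * W s) := by
  have hbr := fun t => abs_sum_dist_mul_le hPpos hPsum hρpos hρsum hπ t r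
  have hbW := fun t => abs_sum_dist_mul_le hPpos hPsum hρpos hρsum hπ t W
  have hK : ∀ t, |∑ s, stateDist P π ρ₀ t s * r s| ≤ (∑ s, |r s|) + ∑ s, |W s| := by
    intro t
    refine (hbr t).trans ?_
    have : (0:ℝ) ≤ ∑ s, |W s| := Finset.sum_nonneg fun s _ => abs_nonneg _
    linarith
  have hK' : ∀ t, |∑ s, stateDist P π ρ₀ t s * W s| ≤ (∑ s, |r s|) + ∑ s, |W s| := by
    intro t
    refine (hbW t).trans ?_
    have : (0:ℝ) ≤ ∑ s, |r s| := Finset.sum_nonneg fun s _ => abs_nonneg _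
    linarith
  have h := tele_hasSum hγ0.le hγ1 hK hK'
  have heq : ∀ t, γ ^ t * ((∑ s, stateDist P π ρ₀ t s * r s)
      + γ * (∑ s', stateDist P π ρ₀ (t+1) s' * W s')
      - ∑ s, stateDist P π ρ₀ t s * W s)
      = γ ^ t * ∑ s, stateDist P π ρ₀ t s *
        (∑ a, π s a * (r s + γ * ∑ s', P s a s' * W s') - W s) := by
    intro t; rw [step_identity hπ]
  have h0 : (∑ s, stateDist P π ρ₀ 0 s * W s) = ∑ s, ρ₀ s * W s := rfl
  rw [← h0]
  exact HasSum.congr_fun h fun t => (heq t).symm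

/-- If `W` satisfies the Bellman equation for `π`, the discounted reward sums to `∑ ρ₀ W`. -/
lemma bellman_tsum (r W : S → ℝ)
    (hbell : ∀ s, W s = ∑ a, π s a * (r s + γ * ∑ s', P s a s' * W s')) :
    (∑' t, γ ^ t * ∑ s, stateDist P π ρ₀ t s * r s) = ∑ s, ρ₀ s * W s := by
  have h := value_hasSum hγ0 hγ1 hPpos hPsum hρpos hρsum hπ r W
  have hz : (fun t => γ ^ t * ∑ s, stateDist P π ρ₀ t s *
      (∑ a, π s a * (r s + γ * ∑ s', P s a s' * W s') - W s)) = fun _ => (0:ℝ) := by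
    funext t
    have : ∀ s, (∑ a, π s a * (r s + γ * ∑ s', P s a s' * W s') - W s) = 0 := by
      intro s; rw [← hbell s]; ring
    simp [this]
  rw [hz] at h
  have := hasSum_zero (α := ℝ) (β := ℕ) (L := SummationFilter.unconditional ℕ)
  have heq := h.unique hasSum_zero
  linarith

lemma visit_hasSum (f : S → ℝ) :
    HasSum (fun t => γ ^ t * ∑ s, stateDist P π ρ₀ t s * f s)
      (∑ s, (∑' t : ℕ, γ ^ t * stateDist P π ρ₀ t s) * f s) := by
  have hs : ∀ s, HasSum (fun t => γ ^ t * stateDist P π ρ₀ t s * f s)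
      ((∑' t : ℕ, γ ^ t * stateDist P π ρ₀ t s) * f s) := by
    intro s
    have hsum : Summable (fun t => γ ^ t * stateDist P π ρ₀ t s) := by
      refine summable_of_geom_bound hγ0.le hγ1 (K := 1) fun t => ?_
      rw [abs_mul, abs_pow, abs_of_nonneg hγ0.le, one_mul, mul_comm,
        abs_of_nonneg (stateDist_nonneg hPpos hρpos hπ t s)]
      calc stateDist P π ρ₀ t s * γ ^ t ≤ 1 * γ ^ t := mul_le_mul_of_nonneg_right
            (stateDist_le_one hPpos hPsum hρpos hρsum hπ t s) (pow_nonneg hγ0.le t)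
        _ = γ ^ t := one_mul _
    exact hsum.hasSum.mul_right (f s)
  have := hasSum_sum (s := (Finset.univ : Finset S)) (fun s _ => hs s)
  refine this.congr_fun fun t => ?_
  rw [Finset.mul_sum]
  exact Finset.sum_congr rfl fun s _ => by ring

end MDP2
section Pinsker

/-- Log-sum inequality. -/
lemma log_sum_ineq {ι : Type} (t : Finset ι) (p q : ι → ℝ)
    (hp : ∀ a ∈ t, 0 < p a) (hq : ∀ a ∈ t, 0 < q a) :
    (∑ a ∈ t, p a) * Real.log ((∑ a ∈ t, p a) / (∑ a ∈ t, q a))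
      ≤ ∑ a ∈ t, p a * Real.log (p a / q a) := by
  rcases t.eq_empty_or_nonempty with rfl | hne
  · simp
  have hQ : 0 < ∑ a ∈ t, q a := Finset.sum_pos hq hne
  have hP : 0 < ∑ a ∈ t, p a := Finset.sum_pos hp hne
  set Q := ∑ a ∈ t, q a with hQdef
  set Pp := ∑ a ∈ t, p a with hPdef
  have h₀ : ∀ a ∈ t, 0 ≤ q a / Q := fun a ha => div_nonneg (hq a ha).le hQ.le
  have h₁ : ∑ a ∈ t, q a / Q = 1 := by rw [← Finset.sum_div, div_self hQ.ne']
  have hmem : ∀ a ∈ t, p a / q a ∈ Set.Ici (0:ℝ) :=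
    fun a ha => Set.mem_Ici.2 (div_nonneg (hp a ha).le (hq a ha).le)
  have jensen := Real.convexOn_mul_log.map_sum_le h₀ h₁ hmem
  have hz : ∑ a ∈ t, (q a / Q) • (p a / q a) = Pp / Q := by
    have : ∀ a ∈ t, (q a / Q) • (p a / q a) = p a / Q := by
      intro a ha
      rw [smul_eq_mul]
      field_simp [(hq a ha).ne']
    rw [Finset.sum_congr rfl this, ← Finset.sum_div]
  rw [hz] at jensen
  have hrhs : ∑ a ∈ t, (q a / Q) • ((p a / q a) * Real.log (p a / q a))
      = (∑ a ∈ t, p a * Real.log (p a / q a)) / Q := by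
    have : ∀ a ∈ t, (q a / Q) • (p a / q a * Real.log (p a / q a))
        = p a * Real.log (p a / q a) / Q := by
      intro a ha
      rw [smul_eq_mul]
      field_simp [(hq a ha).ne']
    rw [Finset.sum_congr rfl this, ← Finset.sum_div]
  rw [hrhs] at jensen
  have := mul_le_mul_of_nonneg_left jensen hQ.le
  rw [mul_div_cancel₀ _ hQ.ne'] at this
  calc Pp * Real.log (Pp / Q) = Q * (Pp / Q * (Pp / Q).log) := by
        field_simp
    _ ≤ ∑ a ∈ t, p a * Real.log (p a / q a) := this

/-- Scalar Pinsker inequality. -/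
lemma pinsker_scalar {x y : ℝ} (hy : 0 < y) (hyx : y ≤ x) (hx1 : x < 1) :
    2 * (x - y) ^ 2 ≤ x * Real.log (x / y) + (1 - x) * Real.log ((1 - x) / (1 - y)) := by
  have hx0 : 0 < x := lt_of_lt_of_le hy hyx
  have hy1 : y < 1 := lt_of_le_of_lt hyx hx1
  set f : ℝ → ℝ := fun t => x * (Real.log x - Real.log t)
      + (1 - x) * (Real.log (1 - x) - Real.log (1 - t)) - 2 * (x - t) ^ 2 with hf
  have hder : ∀ t ∈ Set.Icc y x, HasDerivAt f
      (-(x * t⁻¹) + (1 - x) * ((1 - t)⁻¹) + 4 * (x - t)) t := by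
    intro t ht
    have ht0 : 0 < t := lt_of_lt_of_le hy ht.1
    have ht1 : t < 1 := lt_of_le_of_lt ht.2 hx1
    have h1 : HasDerivAt (fun t : ℝ => Real.log t) t⁻¹ t := Real.hasDerivAt_log ht0.ne'
    have h2 : HasDerivAt (fun t : ℝ => (1:ℝ) - t) (-1) t := by
      simpa using (hasDerivAt_id' t).const_sub (1:ℝ)
    have h3 : HasDerivAt (fun t : ℝ => Real.log (1 - t)) ((1 - t)⁻¹ * (-1)) t :=
      (Real.hasDerivAt_log (by linarith : (0:ℝ) < 1 - t).ne').comp t h2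
    have h4 : HasDerivAt (fun t : ℝ => x - t) (-1) t := by
      simpa using (hasDerivAt_id' t).const_sub x
    have h5 : HasDerivAt (fun t : ℝ => (x - t) ^ 2) (2 * (x - t) ^ 1 * (-1)) t := h4.pow 2
    have hA : HasDerivAt (fun t : ℝ => x * (Real.log x - Real.log t)) (x * (0 - t⁻¹)) t :=
      (((hasDerivAt_const t (Real.log x)).sub h1)).const_mul x
    have hB : HasDerivAt (fun t : ℝ => (1 - x) * (Real.log (1 - x) - Real.log (1 - t)))
        ((1 - x) * (0 - (1 - t)⁻¹ * (-1))) t :=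
      (((hasDerivAt_const t (Real.log (1 - x))).sub h3)).const_mul (1 - x)
    have hC : HasDerivAt (fun t : ℝ => 2 * (x - t) ^ 2) (2 * (2 * (x - t) ^ 1 * (-1))) t :=
      h5.const_mul 2
    have := (hA.add hB).sub hC
    exact this.congr_deriv (by ring)
  have hanti : AntitoneOn f (Set.Icc y x) := by
    refine antitoneOn_of_deriv_nonpos (convex_Icc y x) ?_ ?_ ?_
    · exact fun t ht => ((hder t ht).differentiableAt).continuousAt.continuousWithinAt
    · intro t ht
      rw [interior_Icc] at ht
      exact ((hder t (Set.mem_Icc_of_Ioo ht)).differentiableAt).differentiableWithinAt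
    · intro t ht
      rw [interior_Icc] at ht
      rw [(hder t (Set.mem_Icc_of_Ioo ht)).deriv]
      have ht0 : 0 < t := lt_of_lt_of_le hy ht.1.le
      have ht1 : t < 1 := lt_trans ht.2 hx1
      have hg : 0 < t * (1 - t) := by nlinarith
      have key : -(x * t⁻¹) + (1 - x) * (1 - t)⁻¹ = (t - x) / (t * (1 - t)) := by
        rw [eq_div_iff hg.ne']
        field_simp [ht0.ne', (show (1:ℝ) - t ≠ 0 by linarith)]
        ring
      rw [key]
      have h14 : t * (1 - t) ≤ 1 / 4 := by nlinarith [sq_nonneg (1 - 2 * t)]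
      have hxt : (0:ℝ) ≤ x - t := by linarith [ht.2]
      have hdiv : (x - t) / (1 / 4) ≤ (x - t) / (t * (1 - t)) :=
        div_le_div_of_nonneg_left hxt hg h14
      have : (x - t) / (1 / 4) = 4 * (x - t) := by ring
      rw [this] at hdiv
      have hneg : (t - x) / (t * (1 - t)) = -((x - t) / (t * (1 - t))) := by ring
      rw [hneg]
      linarith
  have hmem_y : y ∈ Set.Icc y x := Set.mem_Icc.2 ⟨le_refl y, hyx⟩
  have hmem_x : x ∈ Set.Icc y x := Set.mem_Icc.2 ⟨hyx, le_refl x⟩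
  have hfx : f x = 0 := by simp [hf]
  have h := hanti hmem_y hmem_x hyx
  rw [hfx] at h
  have h2 : 2 * (x - y) ^ 2 ≤ x * (Real.log x - Real.log y)
      + (1 - x) * (Real.log (1 - x) - Real.log (1 - y)) := by
    simp only [hf] at h
    linarith
  rw [Real.log_div hx0.ne' hy.ne',
    Real.log_div (by linarith : (0:ℝ) < 1 - x).ne' (by linarith : (0:ℝ) < 1 - y).ne']
  exact h2

end Pinsker
/-- Pinsker's inequality for finite distributions. -/
lemma pinsker_finset {A : Type} [Fintype A] {p q : A → ℝ}
    (hp : ∀ a, 0 < p a) (hq : ∀ a, 0 < q a)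
    (hps : ∑ a, p a = 1) (hqs : ∑ a, q a = 1) :
    (∑ a, |p a - q a|) ^ 2 ≤ 2 * ∑ a, p a * Real.log (p a / q a) := by
  classical
  have hAne : Nonempty A := by
    by_contra h
    rw [not_nonempty_iff] at h
    simp [Finset.univ_eq_empty] at hps
  set B : Finset A := Finset.univ.filter (fun a => q a < p a) with hB
  have hsplit : ∀ f : A → ℝ, (∑ a ∈ B, f a) + ∑ a ∈ Finset.univ \ B, f a = ∑ a, f a := by
    intro f
    rw [add_comm]
    exact Finset.sum_sdiff (Finset.filter_subset _ _)
  set x := ∑ a ∈ B, p a with hx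
  set y := ∑ a ∈ B, q a with hy
  have hpc : ∑ a ∈ Finset.univ \ B, p a = 1 - x := by
    have := hsplit p
    rw [hps] at this
    linarith
  have hqc : ∑ a ∈ Finset.univ \ B, q a = 1 - y := by
    have := hsplit q
    rw [hqs] at this
    linarith
  have habs : ∑ a, |p a - q a| = 2 * (x - y) := by
    rw [← hsplit (fun a => |p a - q a|)]
    have h1 : ∑ a ∈ B, |p a - q a| = x - y := by
      rw [hx, hy, ← Finset.sum_sub_distrib]
      refine Finset.sum_congr rfl fun a ha => ?_
      rw [abs_of_pos]
      have := (Finset.mem_filter.1 ha).2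
      linarith
    have h2 : ∑ a ∈ Finset.univ \ B, |p a - q a| = (1 - y) - (1 - x) := by
      rw [← hqc, ← hpc, ← Finset.sum_sub_distrib]
      refine Finset.sum_congr rfl fun a ha => ?_
      have : ¬ q a < p a := by
        have := (Finset.mem_sdiff.1 ha).2
        simpa [hB] using this
      rw [abs_of_nonpos (by linarith)]
      ring
    rw [h1, h2]
    ring
  have hKL : x * Real.log (x / y) + (1 - x) * Real.log ((1 - x) / (1 - y))
      ≤ ∑ a, p a * Real.log (p a / q a) := by
    rw [← hsplit (fun a => p a * Real.log (p a / q a))]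
    have h1 := log_sum_ineq B p q (fun a _ => hp a) (fun a _ => hq a)
    have h2 := log_sum_ineq (Finset.univ \ B) p q (fun a _ => hp a) (fun a _ => hq a)
    rw [hpc, hqc] at h2
    exact add_le_add h1 h2
  rcases Finset.eq_empty_or_nonempty B with hBe | hBne
  · -- p ≤ q everywhere, hence p = q
    have hpq : ∀ a, p a = q a := by
      intro a
      by_contra hne
      have hle : ∀ b, p b ≤ q b := by
        intro b
        by_contra hlt
        push_neg at hlt
        have : b ∈ B := Finset.mem_filter.2 ⟨Finset.mem_univ b, hlt⟩
        simp [hBe] at this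
      have hlt : p a < q a := lt_of_le_of_ne (hle a) hne
      have : ∑ a, p a < ∑ a, q a :=
        Finset.sum_lt_sum (fun b _ => hle b) ⟨a, Finset.mem_univ a, hlt⟩
      rw [hps, hqs] at this
      exact lt_irrefl _ this
    have h0 : ∑ a, |p a - q a| = 0 := by
      refine Finset.sum_eq_zero fun a _ => ?_
      rw [hpq a, sub_self, abs_zero]
    rw [h0]
    have : (0:ℝ) ≤ ∑ a, p a * Real.log (p a / q a) := by
      have := log_sum_ineq Finset.univ p q (fun a _ => hp a) (fun a _ => hq a)
      rw [hps, hqs] at this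
      simpa using this
    nlinarith
  · -- B nonempty
    have hy0 : 0 < y := Finset.sum_pos (fun a _ => hq a) hBne
    have hyx : y ≤ x := by
      rw [hx, hy]
      refine Finset.sum_le_sum fun a ha => ?_
      exact ((Finset.mem_filter.1 ha).2).le
    have hBc : (Finset.univ \ B).Nonempty := by
      by_contra h
      rw [Finset.not_nonempty_iff_eq_empty] at h
      have hBall : B = Finset.univ := by
        rwa [Finset.sdiff_eq_empty_iff_subset, Finset.univ_subset_iff] at h
      have hppos : ∀ a : A, q a < p a := by
        intro a
        have : a ∈ B := hBall ▸ Finset.mem_univ a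
        exact (Finset.mem_filter.1 this).2
      have : ∑ a, q a < ∑ a, p a :=
        Finset.sum_lt_sum_of_nonempty Finset.univ_nonempty (fun a _ => hppos a)
      rw [hps, hqs] at this
      exact lt_irrefl _ this
    have hx1 : x < 1 := by
      have : 0 < ∑ a ∈ Finset.univ \ B, p a := Finset.sum_pos (fun a _ => hp a) hBc
      rw [hpc] at this
      linarith
    have := pinsker_scalar hy0 hyx hx1
    rw [habs]
    nlinarith
section Aux

/-- If the expected value of `f s ·` under every strictly positive policy is bounded by `e`,
then each `|f s a|` is bounded by `e`. -/
lemma abs_le_of_policy_bound {S A : Type} [Fintype A] [Nonempty A] (f : S → A → ℝ) (e : ℝ)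
    (h : ∀ (π : S → A → ℝ), IsPolicy π → ∀ s, |∑ a, π s a * f s a| ≤ e) (s : S) (a : A) :
    |f s a| ≤ e := by
  classical
  set n : ℝ := (Fintype.card A : ℝ) with hn
  have hn0 : 0 < n := by
    rw [hn]
    exact_mod_cast Fintype.card_pos
  set T : ℝ := ∑ b, f s b with hT
  -- family of policies
  set g : ℕ → ℝ := fun k => (1:ℝ) / (k + 1) with hg
  have hg0 : ∀ k, 0 < g k := by
    intro k
    rw [hg]
    positivity
  have hg1 : ∀ k, g k ≤ 1 := by
    intro k
    rw [hg]
    rw [div_le_one (by positivity)]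
    simp
  have hpol : ∀ k, IsPolicy (fun (_ : S) (b : A) =>
      g k / n + (1 - g k) * (if b = a then 1 else 0)) := by
    intro k
    constructor
    · intro s' b
      have h1 : 0 < g k / n := div_pos (hg0 k) hn0
      have h2 : 0 ≤ (1 - g k) * (if b = a then 1 else 0) := by
        refine mul_nonneg (by linarith [hg1 k]) ?_
        split <;> norm_num
      linarith
    · intro s'
      have h1 : ∑ b, (if b = a then (1:ℝ) else 0) = 1 := by
        rw [Finset.sum_ite_eq' Finset.univ a (fun _ => (1:ℝ))]
        simp
      rw [Finset.sum_add_distrib, ← Finset.mul_sum, h1, mul_one, Finset.sum_const,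
        Finset.card_univ, nsmul_eq_mul]
      have h2 : (Fintype.card A : ℝ) * (g k / n) = g k := by
        rw [hn]
        field_simp
      rw [h2]
      ring
  have hval : ∀ k, ∑ b, (g k / n + (1 - g k) * (if b = a then 1 else 0)) * f s b
      = (g k / n) * T + (1 - g k) * f s a := by
    intro k
    have h1 : ∑ b, (if b = a then (1:ℝ) else 0) * f s b = f s a := by
      simp only [ite_mul, one_mul, zero_mul]
      rw [Finset.sum_ite_eq' Finset.univ a (fun b => f s b)]
      simp
    calc ∑ b, (g k / n + (1 - g k) * (if b = a then 1 else 0)) * f s b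
        = ∑ b, ((g k / n) * f s b + (1 - g k) * ((if b = a then 1 else 0) * f s b)) :=
          Finset.sum_congr rfl fun b _ => by ring
      _ = (g k / n) * T + (1 - g k) * f s a := by
          rw [Finset.sum_add_distrib, ← Finset.mul_sum, ← Finset.mul_sum, h1, hT]
  have hbd : ∀ k, |(g k / n) * T + (1 - g k) * f s a| ≤ e := by
    intro k
    have := h _ (hpol k) s
    rwa [hval k] at this
  -- limit
  have htend : Filter.Tendsto g Filter.atTop (nhds 0) :=
    tendsto_one_div_add_atTop_nhds_zero_nat
  have hlim : Filter.Tendsto (fun k => |(g k / n) * T + (1 - g k) * f s a|)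
      Filter.atTop (nhds |f s a|) := by
    have h1 : Filter.Tendsto (fun k => (g k / n) * T + (1 - g k) * f s a)
        Filter.atTop (nhds ((0 / n) * T + (1 - 0) * f s a)) := by
      exact ((htend.div_const n).mul_const T).add
        ((tendsto_const_nhds.sub htend).mul_const (f s a))
    simp only [zero_div, zero_mul, sub_zero, one_mul, zero_add] at h1
    exact h1.abs
  exact le_of_tendsto hlim (Filter.Eventually.of_forall hbd)

/-- The L1 distance between state distributions grows at most linearly. -/
lemma dist_diff_bound {S A : Type} [Fintype S] [Fintype A]
    {P : S → A → S → ℝ} {π π' : S → A → ℝ} {ρ₀ : S → ℝ} {δ : ℝ}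
    (hPpos : ∀ s a s', 0 ≤ P s a s') (hPsum : ∀ s a, ∑ s', P s a s' = 1)
    (hρpos : ∀ s, 0 ≤ ρ₀ s) (hρsum : ∑ s, ρ₀ s = 1)
    (hπ : IsPolicy π) (hπ' : IsPolicy π')
    (hδ : ∀ s, ∑ a, |π' s a - π s a| ≤ δ) :
    ∀ t, ∑ s, |stateDist P π' ρ₀ t s - stateDist P π ρ₀ t s| ≤ t * δ := by
  have hSne : Nonempty S := by
    by_contra h
    rw [not_nonempty_iff] at h
    simp [Finset.univ_eq_empty] at hρsum
  obtain ⟨s0⟩ := hSne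
  have hδ0 : 0 ≤ δ :=
    le_trans (Finset.sum_nonneg fun a _ => abs_nonneg _) (hδ s0)
  intro t
  induction t with
  | zero => simp [stateDist]
  | succ t ih =>
    have key : ∑ s', |stateDist P π' ρ₀ (t+1) s' - stateDist P π ρ₀ (t+1) s'|
        ≤ ∑ s, ∑ a, |stateDist P π' ρ₀ t s * π' s a - stateDist P π ρ₀ t s * π s a| := by
      have hexp : ∀ s', stateDist P π' ρ₀ (t+1) s' - stateDist P π ρ₀ (t+1) s'
          = ∑ s, ∑ a, (stateDist P π' ρ₀ t s * π' s a - stateDist P π ρ₀ t s * π s a)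
              * P s a s' := by
        intro s'
        simp only [stateDist, ← Finset.sum_sub_distrib]
        exact Finset.sum_congr rfl fun s _ => Finset.sum_congr rfl fun a _ => by ring
      calc ∑ s', |stateDist P π' ρ₀ (t+1) s' - stateDist P π ρ₀ (t+1) s'|
          ≤ ∑ s', ∑ s, ∑ a, |stateDist P π' ρ₀ t s * π' s a - stateDist P π ρ₀ t s * π s a|
              * P s a s' := by
            refine Finset.sum_le_sum fun s' _ => ?_
            rw [hexp s']
            refine (Finset.abs_sum_le_sum_abs _ _).trans ?_
            refine Finset.sum_le_sum fun s _ => ?_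
            refine (Finset.abs_sum_le_sum_abs _ _).trans ?_
            refine Finset.sum_le_sum fun a _ => ?_
            rw [abs_mul, abs_of_nonneg (hPpos s a s')]
        _ = ∑ s, ∑ a, |stateDist P π' ρ₀ t s * π' s a - stateDist P π ρ₀ t s * π s a| := by
            rw [Finset.sum_comm]
            refine Finset.sum_congr rfl fun s _ => ?_
            rw [Finset.sum_comm]
            refine Finset.sum_congr rfl fun a _ => ?_
            rw [← Finset.mul_sum, hPsum, mul_one]
    refine key.trans ?_
    have hsplit : ∀ s a, |stateDist P π' ρ₀ t s * π' s a - stateDist P π ρ₀ t s * π s a|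
        ≤ |stateDist P π' ρ₀ t s - stateDist P π ρ₀ t s| * π' s a
          + stateDist P π ρ₀ t s * |π' s a - π s a| := by
      intro s a
      have : stateDist P π' ρ₀ t s * π' s a - stateDist P π ρ₀ t s * π s a
          = (stateDist P π' ρ₀ t s - stateDist P π ρ₀ t s) * π' s a
            + stateDist P π ρ₀ t s * (π' s a - π s a) := by ring
      rw [this]
      refine (abs_add_le _ _).trans ?_
      rw [abs_mul, abs_mul, abs_of_nonneg (hπ'.1 s a).le,
        abs_of_nonneg (stateDist_nonneg hPpos hρpos hπ t s)]
    calc ∑ s, ∑ a, |stateDist P π' ρ₀ t s * π' s a - stateDist P π ρ₀ t s * π s a|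
        ≤ ∑ s, ∑ a, (|stateDist P π' ρ₀ t s - stateDist P π ρ₀ t s| * π' s a
            + stateDist P π ρ₀ t s * |π' s a - π s a|) :=
          Finset.sum_le_sum fun s _ => Finset.sum_le_sum fun a _ => hsplit s a
      _ = (∑ s, |stateDist P π' ρ₀ t s - stateDist P π ρ₀ t s|)
            + ∑ s, stateDist P π ρ₀ t s * ∑ a, |π' s a - π s a| := by
          simp only [Finset.sum_add_distrib]
          congr 1
          · refine Finset.sum_congr rfl fun s _ => ?_
            rw [← Finset.mul_sum, hπ'.2, mul_one]
          · exact Finset.sum_congr rfl fun s _ => (Finset.mul_sum _ _ _).symm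
      _ ≤ t * δ + δ := by
          refine add_le_add ih ?_
          calc ∑ s, stateDist P π ρ₀ t s * ∑ a, |π' s a - π s a|
              ≤ ∑ s, stateDist P π ρ₀ t s * δ := by
                refine Finset.sum_le_sum fun s _ => ?_
                exact mul_le_mul_of_nonneg_left (hδ s)
                  (stateDist_nonneg hPpos hρpos hπ t s)
            _ = δ := by rw [← Finset.sum_mul, stateDist_sum hPsum hρsum hπ, one_mul]
      _ = (t + 1 : ℕ) * δ := by push_cast; ring

end Aux

/-- Monotonic improvement of the MM-style iteration
π_{i+1} = argmax_π [ L_{π_i}(π) − C·D_KL^max(π_i, π) ]. -/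
theorem stmt_9 {S A : Type} [Fintype S] [Fintype A] [Nonempty S]
    (P : S → A → S → ℝ) (r : S → ℝ) (ρ₀ : S → ℝ) (γ : ℝ)
    (πs : ℕ → S → A → ℝ) (V : ℕ → S → ℝ) (Q Aπ : ℕ → S → A → ℝ)
    (ε : ℕ → ℝ) (C : ℕ → ℝ) (η : ℕ → ℝ) (L M : ℕ → (S → A → ℝ) → ℝ)
    (Dmax : ℕ → (S → A → ℝ) → ℝ)
    (hγ0 : 0 < γ) (hγ1 : γ < 1)
    (hPpos : ∀ s a s', 0 ≤ P s a s') (hPsum : ∀ s a, ∑ s', P s a s' = 1)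
    (hρpos : ∀ s, 0 ≤ ρ₀ s) (hρsum : ∑ s, ρ₀ s = 1)
    (hπs : ∀ i, IsPolicy (πs i))
    (hV : ∀ i s, V i s = ∑ a, πs i s a * (r s + γ * ∑ s', P s a s' * V i s'))
    (hQ : ∀ i s a, Q i s a = r s + γ * ∑ s', P s a s' * V i s')
    (hA : ∀ i s a, Aπ i s a = Q i s a - V i s)
    (hε : ∀ i (π : S → A → ℝ), IsPolicy π → ∀ s, |∑ a, π s a * Aπ i s a| ≤ ε i)
    (hC : ∀ i, C i = 2 * ε i * γ / (1 - γ) ^ 2)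
    (hη : ∀ i, η i = ∑ s, ρ₀ s * V i s)
    (hL : ∀ i (π : S → A → ℝ),
      L i π = η i + ∑ s, visit P (πs i) ρ₀ γ s * ∑ a, π s a * Aπ i s a)
    (hDmax : ∀ i (π : S → A → ℝ),
      IsGreatest (Set.range fun s => ∑ a, πs i s a * Real.log (πs i s a / π s a))
        (Dmax i π))
    (hM : ∀ i (π : S → A → ℝ), M i π = L i π - C i * Dmax i π)
    -- π_{i+1} maximizes M_i over all stochastic policies:
    (hargmax : ∀ i (π : S → A → ℝ), IsPolicy π → M i π ≤ M i (πs (i+1))) :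
    ∀ i, η i ≤ η (i+1) := by
  intro i
  have hpol := hπs i
  have hpol' := hπs (i+1)
  obtain ⟨s0⟩ := ‹Nonempty S›
  have hAne : Nonempty A := by
    by_contra h
    rw [not_nonempty_iff] at h
    have := hpol.2 s0
    simp [Finset.univ_eq_empty] at this
  -- the old policy has zero expected advantage
  have hzero : ∀ s, ∑ a, πs i s a * Aπ i s a = 0 := by
    intro s
    have h1 : ∑ a, πs i s a * Aπ i s a = (∑ a, πs i s a * Q i s a) - V i s := by
      simp only [hA, mul_sub]
      rw [Finset.sum_sub_distrib, ← Finset.sum_mul, hpol.2, one_mul]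
    have h2 : ∑ a, πs i s a * Q i s a = V i s := by
      conv_rhs => rw [hV i s]
      exact Finset.sum_congr rfl fun a _ => by rw [hQ i s a]
    rw [h1, h2, sub_self]
  have hε0 : 0 ≤ ε i := by
    have := hε i (πs i) hpol s0
    rw [hzero s0] at this
    simpa using this
  -- pointwise advantage bound
  have hAb : ∀ s a, |Aπ i s a| ≤ ε i := abs_le_of_policy_bound (Aπ i) (ε i) (hε i)
  -- Dmax facts
  have hD := hDmax i (πs (i+1))
  have hDub : ∀ s, ∑ a, πs i s a * Real.log (πs i s a / πs (i+1) s a)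
      ≤ Dmax i (πs (i+1)) := fun s => hD.2 ⟨s, rfl⟩
  have hpins : ∀ s, (∑ a, |πs i s a - πs (i+1) s a|) ^ 2 ≤ 2 * Dmax i (πs (i+1)) := by
    intro s
    have h1 := pinsker_finset (p := fun a => πs i s a) (q := fun a => πs (i+1) s a)
      (fun a => hpol.1 s a) (fun a => hpol'.1 s a) (hpol.2 s) (hpol'.2 s)
    have h2 := hDub s
    linarith
  have hDnn : 0 ≤ 2 * Dmax i (πs (i+1)) :=
    le_trans (sq_nonneg _) (hpins s0)
  set δ := Real.sqrt (2 * Dmax i (πs (i+1))) with hδdef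
  have hδ0 : 0 ≤ δ := Real.sqrt_nonneg _
  have hδsq : δ ^ 2 = 2 * Dmax i (πs (i+1)) := Real.sq_sqrt hDnn
  have hstate : ∀ s, ∑ a, |πs (i+1) s a - πs i s a| ≤ δ := by
    intro s
    have h1 : ∑ a, |πs (i+1) s a - πs i s a| = ∑ a, |πs i s a - πs (i+1) s a| :=
      Finset.sum_congr rfl fun a _ => abs_sub_comm _ _
    have h2 := hpins s
    have h3 : (0:ℝ) ≤ ∑ a, |πs i s a - πs (i+1) s a| :=
      Finset.sum_nonneg fun a _ => abs_nonneg _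
    rw [h1]
    nlinarith [hδsq, hδ0]
  -- the surrogate advantage function
  set Abar_ : S → ℝ := fun s => ∑ a, πs (i+1) s a * Aπ i s a with hAbar_
  have hAbar : ∀ s, |Abar_ s| ≤ ε i * δ := by
    intro s
    have h1 : Abar_ s = ∑ a, (πs (i+1) s a - πs i s a) * Aπ i s a := by
      rw [hAbar_]
      simp only
      rw [← sub_zero (∑ a, πs (i+1) s a * Aπ i s a), ← hzero s, ← Finset.sum_sub_distrib]
      exact Finset.sum_congr rfl fun a _ => by ring
    rw [h1]
    calc |∑ a, (πs (i+1) s a - πs i s a) * Aπ i s a|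
        ≤ ∑ a, |(πs (i+1) s a - πs i s a) * Aπ i s a| := Finset.abs_sum_le_sum_abs _ _
      _ ≤ ∑ a, |πs (i+1) s a - πs i s a| * ε i := by
          refine Finset.sum_le_sum fun a _ => ?_
          rw [abs_mul]
          exact mul_le_mul_of_nonneg_left (hAb s a) (abs_nonneg _)
      _ = (∑ a, |πs (i+1) s a - πs i s a|) * ε i := (Finset.sum_mul _ _ _).symm
      _ ≤ δ * ε i := mul_le_mul_of_nonneg_right (hstate s) hε0
      _ = ε i * δ := mul_comm _ _
  -- HasSum developments
  have hg : ∀ s, ∑ a, πs (i+1) s a * (r s + γ * ∑ s', P s a s' * V i s') - V i s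
      = Abar_ s := by
    intro s
    have h1 : Abar_ s
        = (∑ a, πs (i+1) s a * (r s + γ * ∑ s', P s a s' * V i s')) - V i s := by
      rw [hAbar_]
      simp only [hA, hQ, mul_sub]
      rw [Finset.sum_sub_distrib, ← Finset.sum_mul, hpol'.2, one_mul]
    rw [h1]
  have hS1 := value_hasSum hγ0 hγ1 hPpos hPsum hρpos hρsum hpol' r (V i)
  have hRsum : (∑' t, γ ^ t * ∑ s, stateDist P (πs (i+1)) ρ₀ t s * r s) = η (i+1) := by
    rw [hη]
    exact bellman_tsum hγ0 hγ1 hPpos hPsum hρpos hρsum hpol' r (V (i+1)) (hV (i+1))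
  rw [hRsum, ← hη i] at hS1
  replace hS1 : HasSum (fun t => γ ^ t * ∑ s, stateDist P (πs (i+1)) ρ₀ t s * Abar_ s)
      (η (i+1) - η i) := by
    refine hS1.congr_fun fun t => ?_
    congr 1
    exact Finset.sum_congr rfl fun s _ => by rw [hg s]
  have hS2 := visit_hasSum hγ0 hγ1 hPpos hPsum hρpos hρsum hpol (f := Abar_)
    (P := P) (ρ₀ := ρ₀)
  have hvis : ∀ s, (∑' t : ℕ, γ ^ t * stateDist P (πs i) ρ₀ t s) = visit P (πs i) ρ₀ γ s :=
    fun _ => rfl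
  simp only [hvis] at hS2
  have hS3 := hS1.sub hS2
  have hγnorm : ‖γ‖ < 1 := by
    rw [Real.norm_eq_abs, abs_of_pos hγ0]
    exact hγ1
  have hgeo : HasSum (fun t : ℕ => (ε i * δ ^ 2) * ((t:ℝ) * γ ^ t))
      ((ε i * δ ^ 2) * (γ / (1 - γ) ^ 2)) :=
    (hasSum_coe_mul_geometric_of_norm_lt_one hγnorm).mul_left _
  have hineq : -((ε i * δ ^ 2) * (γ / (1 - γ) ^ 2))
      ≤ (η (i+1) - η i) - ∑ s, visit P (πs i) ρ₀ γ s * Abar_ s := by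
    refine hasSum_le ?_ hgeo.neg hS3
    intro t
    have hd := dist_diff_bound hPpos hPsum hρpos hρsum hpol hpol' hstate t
    have habs : |∑ s, stateDist P (πs (i+1)) ρ₀ t s * Abar_ s
        - ∑ s, stateDist P (πs i) ρ₀ t s * Abar_ s| ≤ ((t:ℝ) * δ) * (ε i * δ) := by
      rw [← Finset.sum_sub_distrib]
      calc |∑ s, (stateDist P (πs (i+1)) ρ₀ t s * Abar_ s
              - stateDist P (πs i) ρ₀ t s * Abar_ s)|
          ≤ ∑ s, |(stateDist P (πs (i+1)) ρ₀ t s - stateDist P (πs i) ρ₀ t s) * Abar_ s| := by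
            refine (Finset.abs_sum_le_sum_abs _ _).trans ?_
            refine le_of_eq (Finset.sum_congr rfl fun s _ => ?_)
            congr 1
            ring
        _ ≤ ∑ s, |stateDist P (πs (i+1)) ρ₀ t s - stateDist P (πs i) ρ₀ t s| * (ε i * δ) := by
            refine Finset.sum_le_sum fun s _ => ?_
            rw [abs_mul]
            exact mul_le_mul_of_nonneg_left (hAbar s) (abs_nonneg _)
        _ = (∑ s, |stateDist P (πs (i+1)) ρ₀ t s - stateDist P (πs i) ρ₀ t s|) * (ε i * δ) :=
            (Finset.sum_mul _ _ _).symm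
        _ ≤ ((t:ℝ) * δ) * (ε i * δ) :=
            mul_le_mul_of_nonneg_right hd (mul_nonneg hε0 hδ0)
    have h1 : -(((t:ℝ) * δ) * (ε i * δ)) ≤ ∑ s, stateDist P (πs (i+1)) ρ₀ t s * Abar_ s
        - ∑ s, stateDist P (πs i) ρ₀ t s * Abar_ s := (abs_le.1 habs).1
    have h2 := mul_le_mul_of_nonneg_left h1 (pow_nonneg hγ0.le t)
    calc -((ε i * δ ^ 2) * ((t:ℝ) * γ ^ t))
        = γ ^ t * (-(((t:ℝ) * δ) * (ε i * δ))) := by ring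
      _ ≤ γ ^ t * (∑ s, stateDist P (πs (i+1)) ρ₀ t s * Abar_ s
          - ∑ s, stateDist P (πs i) ρ₀ t s * Abar_ s) := h2
      _ = γ ^ t * ∑ s, stateDist P (πs (i+1)) ρ₀ t s * Abar_ s
          - γ ^ t * ∑ s, stateDist P (πs i) ρ₀ t s * Abar_ s := by ring
  -- Dmax of the current policy is zero
  have hD0 : Dmax i (πs i) = 0 := by
    obtain ⟨s, hs⟩ := (hDmax i (πs i)).1
    rw [← hs]
    refine Finset.sum_eq_zero fun a _ => ?_
    rw [div_self (hpol.1 s a).ne', Real.log_one, mul_zero]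
  have hMi : M i (πs i) = η i := by
    rw [hM, hL, hD0, mul_zero, sub_zero]
    have h1 : ∀ s ∈ Finset.univ, visit P (πs i) ρ₀ γ s * ∑ a, πs i s a * Aπ i s a = 0 := by
      intro s _
      rw [hzero s, mul_zero]
    rw [Finset.sum_eq_zero h1, add_zero]
  have hMi1 : M i (πs (i+1))
      = η i + (∑ s, visit P (πs i) ρ₀ γ s * Abar_ s) - C i * Dmax i (πs (i+1)) := by
    rw [hM, hL]
  have hCD : C i * Dmax i (πs (i+1)) = (ε i * δ ^ 2) * (γ / (1 - γ) ^ 2) := by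
    rw [hC, hδsq]
    ring
  have hMle := hargmax i (πs i) hpol
  rw [hMi, hMi1] at hMle
  rw [hCD] at hMle
  linarith [hineq, hMle]
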